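/- (Commutativity of Lie derivative with flow conjugation, C¹ case) Let U = ξ·∇ and V = η·∇ be C¹ vector fields on ℝ^n with complete (or locally defined) flows, and let ψ ∈ C¹(ℝ^n). Then for each x and small |t|, the function t ↦ U(ψ ∘ e^{-tV})(e^{tV}x) is differentiable with d/dt [U(ψ∘e^{-tV})(e^{tV}x)] = [V,U](ψ∘e^{-tV})(e^{tV}x), where [V,U] := (Vξ − Uη)·∇ (with Vξ meaning the directional derivative of each component of ξ along V). -/

import Mathlib

set_option linter.unusedSectionVars false
set_option maxHeartbeats 1000000
set_option synthInstance.maxHeartbeats 1000000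

open Set Metric Real

section auxLie

variable {E : Type*} [NormedAddCommGroup E] [NormedSpace ℝ E] [ProperSpace E]
variable {η : E → E} {φ : ℝ → E → E}

lemma traj_cont (hφ : ∀ t x, HasDerivAt (fun s => φ s x) (η (φ t x)) t) (y : E) :
    Continuous fun s => φ s y :=
  continuous_iff_continuousAt.2 fun s => (hφ s y).continuousAt

lemma lip_on_ball (hη : ContDiff ℝ 1 η) (z : E) (R : ℝ) :
    ∃ L : NNReal, LipschitzOnWith L η (closedBall z R) := by
  obtain ⟨C, hC⟩ := (isCompact_closedBall z R).exists_bound_of_continuousOn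
    ((hη.continuous_fderiv one_ne_zero).continuousOn (s := closedBall z R))
  refine ⟨⟨max C 0, le_max_right _ _⟩, Convex.lipschitzOnWith_of_nnnorm_fderiv_le
    (fun y _ => (hη.differentiable one_ne_zero) y) (fun y hy => ?_) (convex_closedBall z R)⟩
  apply NNReal.coe_le_coe.mp
  exact le_trans (hC y hy) (le_max_left _ _)

lemma flow_integral (hη : ContDiff ℝ 1 η)
    (hφ0 : ∀ x, φ 0 x = x)
    (hφ : ∀ t x, HasDerivAt (fun s => φ s x) (η (φ t x)) t) (y : E) (h : ℝ) :
    ∫ u in (0:ℝ)..h, η (φ u y) = φ h y - y := by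
  have := intervalIntegral.integral_eq_sub_of_hasDerivAt (f := fun s => φ s y)
    (f' := fun u => η (φ u y)) (fun u _ => hφ u y)
    ((hη.continuous.comp (traj_cont hφ y)).intervalIntegrable 0 h)
  rw [this]
  simp [hφ0 y]

lemma flow_group (hη : ContDiff ℝ 1 η)
    (hφ0 : ∀ x, φ 0 x = x)
    (hφ : ∀ t x, HasDerivAt (fun s => φ s x) (η (φ t x)) t) (a b : ℝ) (x : E) :
    φ a (φ b x) = φ (a + b) x := by
  set T : ℝ := |a| + 1 with hT
  have hTpos : 0 < T := by positivity
  set f : ℝ → E := fun s => φ s (φ b x) with hf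
  set g : ℝ → E := fun s => φ (s + b) x with hg
  have hfc : Continuous f := traj_cont hφ _
  have hgc : Continuous g := (traj_cont hφ x).comp (continuous_add_right b)
  have hK : IsCompact (f '' Icc (-T) T ∪ g '' Icc (-T) T) :=
    ((isCompact_Icc.image hfc).union (isCompact_Icc.image hgc))
  obtain ⟨R, hR⟩ := hK.isBounded.subset_closedBall 0
  obtain ⟨L, hL⟩ := lip_on_ball hη (0 : E) R
  have hg' : ∀ t, HasDerivAt g (η (g t)) t := by
    intro t
    simpa using HasDerivAt.comp_add_const t b (f := fun s => φ s x)
      (f' := η (φ (t + b) x)) (hφ (t + b) x)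
  have heq : EqOn f g (Icc (-T) T) := by
    apply ODE_solution_unique_of_mem_Icc (v := fun _ => η) (s := fun _ => closedBall 0 R)
      (fun _ _ => hL) (t₀ := 0) (by constructor <;> [linarith; linarith] : (0:ℝ) ∈ Ioo (-T) T)
      hfc.continuousOn (fun t _ => hφ t (φ b x))
      (fun t ht => hR (Or.inl (mem_image_of_mem f (Ioo_subset_Icc_self ht))))
      hgc.continuousOn (fun t ht => hg' t)
      (fun t ht => hR (Or.inr (mem_image_of_mem g (Ioo_subset_Icc_self ht))))
    simp [hf, hg, hφ0]
  have : f a = g a := heq ⟨neg_le_of_abs_le (by linarith), le_of_abs_le (by linarith)⟩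
  simpa [hf, hg] using this

lemma flow_boot (hφ0 : ∀ x, φ 0 x = x)
    (hφ : ∀ t x, HasDerivAt (fun s => φ s x) (η (φ t x)) t)
    (z : E) {ρ : ℝ} (hρ0 : 0 < ρ) (hρ1 : ρ ≤ 1)
    {L : NNReal} (hL : LipschitzOnWith L η (closedBall z 2)) :
    ∃ r > 0, ∃ T0 > 0, T0 ≤ 1 ∧
      (∀ y ∈ closedBall z r, ∀ u ∈ Icc (0:ℝ) T0, φ u y ∈ closedBall z ρ) ∧
      (∀ y₁ ∈ closedBall z r, ∀ y₂ ∈ closedBall z r, ∀ u ∈ Icc (0:ℝ) T0,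
        dist (φ u y₁) (φ u y₂) ≤ exp L * dist y₁ y₂) := by
  -- small time control on the trajectory of z
  have hc : Filter.Tendsto (fun u => φ u z) (nhds 0) (nhds z) := by
    have := (hφ 0 z).continuousAt
    rwa [ContinuousAt, hφ0 z] at this
  have h2 : ∀ᶠ u in nhds (0:ℝ), dist (φ u z) z < ρ/2 :=
    Metric.tendsto_nhds.mp hc (ρ/2) (by positivity)
  obtain ⟨T₁', hT₁'pos, hT₁'⟩ := Metric.eventually_nhds_iff.mp h2
  set T₁ : ℝ := T₁'/2 with hT₁def
  have hT₁pos : 0 < T₁ := by positivity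
  have hTz : ∀ u : ℝ, |u| ≤ T₁ → dist (φ u z) z ≤ ρ/2 := by
    intro u hu
    refine le_of_lt (hT₁' ?_)
    rw [Real.dist_eq, sub_zero]
    linarith
  set r : ℝ := ρ/2 * exp (-(L:ℝ)) with hrdef
  have hr0 : 0 < r := by positivity
  have hrρ2 : r ≤ ρ/2 := by
    rw [hrdef]
    nth_rewrite 2 [← mul_one (ρ/2)]
    exact mul_le_mul_of_nonneg_left (Real.exp_le_one_iff.mpr (by simp)) (by positivity)
  set T0 : ℝ := min T₁ 1 with hT0def
  have hT0pos : 0 < T0 := lt_min hT₁pos one_pos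
  have hT0le1 : T0 ≤ 1 := min_le_right _ _
  have hT0leT₁ : T0 ≤ T₁ := min_le_left _ _
  have hrexp : r * exp (L:ℝ) = ρ/2 := by
    rw [hrdef, mul_assoc, ← Real.exp_add]
    simp
  -- main containment claim
  have main : ∀ y ∈ closedBall z r, ∀ u ∈ Icc (0:ℝ) T0, dist (φ u y) (φ u z) ≤ ρ/2 := by
    intro y hy
    have hyz : dist y z ≤ r := mem_closedBall.mp hy
    set B : Set ℝ := {u | u ∈ Icc (0:ℝ) T0 ∧ ∀ u' ∈ Icc (0:ℝ) u, dist (φ u' y) (φ u' z) ≤ ρ}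
      with hBdef
    have h0B : (0:ℝ) ∈ B := by
      refine ⟨⟨le_refl 0, le_of_lt hT0pos⟩, ?_⟩
      intro u' hu'
      have hu0 : u' = 0 := le_antisymm hu'.2 hu'.1
      subst hu0
      simp only [hφ0]
      linarith
    have hBne : B.Nonempty := ⟨0, h0B⟩
    have hBbdd : BddAbove B := ⟨T0, fun u hu => hu.1.2⟩
    -- Gronwall estimate on [0, w] for w ∈ B
    have hG : ∀ w ∈ B, ∀ u ∈ Icc (0:ℝ) w, dist (φ u y) (φ u z) ≤ ρ/2 := by
      intro w hw u hu
      have hwT0 : w ≤ T0 := hw.1.2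
      have hmemz : ∀ t ∈ Ico (0:ℝ) w, φ t z ∈ closedBall z 2 := by
        intro t ht
        have : dist (φ t z) z ≤ ρ/2 := hTz t (by
          rw [abs_of_nonneg ht.1]
          linarith [ht.2])
        simp only [mem_closedBall]
        linarith
      have hmemy : ∀ t ∈ Ico (0:ℝ) w, φ t y ∈ closedBall z 2 := by
        intro t ht
        have h1 : dist (φ t y) (φ t z) ≤ ρ := hw.2 t ⟨ht.1, le_of_lt ht.2⟩
        have h2 : dist (φ t z) z ≤ ρ/2 := hTz t (by
          rw [abs_of_nonneg ht.1]
          linarith [ht.2])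
        simp only [mem_closedBall]
        calc dist (φ t y) z ≤ dist (φ t y) (φ t z) + dist (φ t z) z := dist_triangle _ _ _
          _ ≤ 2 := by linarith
      have hgron := dist_le_of_trajectories_ODE_of_mem
        (v := fun _ => η) (s := fun _ => closedBall z 2) (K := L)
        (fun _ _ => hL)
        ((traj_cont hφ y).continuousOn)
        (fun t _ => (hφ t y).hasDerivWithinAt)
        hmemy
        ((traj_cont hφ z).continuousOn)
        (fun t _ => (hφ t z).hasDerivWithinAt)
        hmemz
        (show dist (φ 0 y) (φ 0 z) ≤ dist y z by simp [hφ0])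
        u hu
      have hexp : exp ((L:ℝ) * (u - 0)) ≤ exp (L:ℝ) := by
        apply Real.exp_le_exp.mpr
        have : u ≤ 1 := le_trans hu.2 (le_trans hwT0 hT0le1)
        nlinarith [hu.1, (L:ℝ).toNNReal, L.coe_nonneg]
      calc dist (φ u y) (φ u z) ≤ dist y z * exp ((L:ℝ) * (u - 0)) := hgron
        _ ≤ r * exp (L:ℝ) := by
            apply mul_le_mul hyz hexp (le_of_lt (Real.exp_pos _)) (le_of_lt hr0)
        _ = ρ/2 := hrexp
    -- the sup of B
    set w₀ : ℝ := sSup B with hw₀def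
    have hw₀0 : 0 ≤ w₀ := le_csSup hBbdd h0B
    have hw₀T0 : w₀ ≤ T0 := csSup_le hBne fun u hu => hu.1.2
    have hw₀B : w₀ ∈ B := by
      refine ⟨⟨hw₀0, hw₀T0⟩, ?_⟩
      intro u' hu'
      rcases eq_or_lt_of_le hu'.2 with heq | hlt
      · rcases eq_or_lt_of_le hw₀0 with h0 | h0
        · have : u' = 0 := by rw [heq, ← h0]
          subst this
          simp only [hφ0]
          linarith
        · rw [heq]
          have hIoo : ∀ v ∈ Ico (0:ℝ) w₀, dist (φ v y) (φ v z) ≤ ρ := by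
            intro v hv
            obtain ⟨w, hwB, hvw⟩ := exists_lt_of_lt_csSup hBne hv.2
            exact hwB.2 v ⟨hv.1, le_of_lt hvw⟩
          have hcontd : Continuous fun v => dist (φ v y) (φ v z) :=
            (traj_cont hφ y).dist (traj_cont hφ z)
          refine le_of_tendsto ((hcontd.tendsto w₀).mono_left
            (nhdsWithin_le_nhds (s := Iio w₀))) ?_
          filter_upwards [Ioo_mem_nhdsLT_of_mem (show w₀ ∈ Ioc (0:ℝ) w₀ from ⟨h0, le_refl _⟩)]
            with v hv
          exact hIoo v ⟨le_of_lt hv.1, hv.2⟩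
      · obtain ⟨w, hwB, hvw⟩ := exists_lt_of_lt_csSup hBne hlt
        exact hwB.2 u' ⟨hu'.1, le_of_lt hvw⟩
    have hw₀eq : w₀ = T0 := by
      by_contra hne
      have hlt : w₀ < T0 := lt_of_le_of_ne hw₀T0 hne
      have hval : dist (φ w₀ y) (φ w₀ z) ≤ ρ/2 := hG w₀ hw₀B w₀ ⟨hw₀0, le_refl _⟩
      have hcontd : Continuous fun v => dist (φ v y) (φ v z) :=
        (traj_cont hφ y).dist (traj_cont hφ z)
      have hev : ∀ᶠ u in nhds w₀, dist (φ u y) (φ u z) < ρ :=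
        (hcontd.tendsto w₀).eventually_lt_const (by linarith)
      obtain ⟨δ', hδ'pos, hδ'⟩ := Metric.eventually_nhds_iff.mp hev
      set w' : ℝ := min (w₀ + δ'/2) T0 with hw'def
      have hw'B : w' ∈ B := by
        refine ⟨⟨le_trans hw₀0 (le_min (by linarith) (le_of_lt hlt)), min_le_right _ _⟩, ?_⟩
        intro u' hu'
        rcases le_or_gt u' w₀ with h | h
        · exact le_trans (hG w₀ hw₀B u' ⟨hu'.1, h⟩) (by linarith)
        · refine le_of_lt (hδ' ?_)
          rw [Real.dist_eq, abs_of_pos (by linarith)]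
          have : u' ≤ w₀ + δ'/2 := le_trans hu'.2 (min_le_left _ _)
          linarith
      have h1 : w' ≤ w₀ := le_csSup hBbdd hw'B
      have h2 : w₀ < w' := lt_min (by linarith) hlt
      linarith
    intro u hu
    exact hG T0 (hw₀eq ▸ hw₀B) u hu
  -- containment
  have hcontain : ∀ y ∈ closedBall z r, ∀ u ∈ Icc (0:ℝ) T0, φ u y ∈ closedBall z ρ := by
    intro y hy u hu
    have h1 := main y hy u hu
    have h2 : dist (φ u z) z ≤ ρ/2 := hTz u (by
      rw [abs_of_nonneg hu.1]
      linarith [hu.2])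
    simp only [mem_closedBall]
    calc dist (φ u y) z ≤ dist (φ u y) (φ u z) + dist (φ u z) z := dist_triangle _ _ _
      _ ≤ ρ := by linarith
  refine ⟨r, hr0, T0, hT0pos, hT0le1, hcontain, ?_⟩
  -- Lipschitz estimate
  intro y₁ hy₁ y₂ hy₂ u hu
  have hmem : ∀ y ∈ closedBall z r, ∀ t ∈ Ico (0:ℝ) T0, φ t y ∈ closedBall z 2 := by
    intro y hy t ht
    exact closedBall_subset_closedBall (by linarith) (hcontain y hy t (Ico_subset_Icc_self ht))
  have hgron := dist_le_of_trajectories_ODE_of_mem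
    (v := fun _ => η) (s := fun _ => closedBall z 2) (K := L)
    (fun _ _ => hL)
    ((traj_cont hφ y₁).continuousOn)
    (fun t _ => (hφ t y₁).hasDerivWithinAt)
    (hmem y₁ hy₁)
    ((traj_cont hφ y₂).continuousOn)
    (fun t _ => (hφ t y₂).hasDerivWithinAt)
    (hmem y₂ hy₂)
    (show dist (φ 0 y₁) (φ 0 y₂) ≤ dist y₁ y₂ by simp [hφ0])
    u hu
  have hexp : exp ((L:ℝ) * (u - 0)) ≤ exp (L:ℝ) := by
    apply Real.exp_le_exp.mpr
    have h1 : u ≤ 1 := le_trans hu.2 hT0le1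
    nlinarith [hu.1, L.coe_nonneg]
  calc dist (φ u y₁) (φ u y₂) ≤ dist y₁ y₂ * exp ((L:ℝ) * (u - 0)) := hgron
    _ ≤ exp (L:ℝ) * dist y₁ y₂ := by
        rw [mul_comm]
        exact mul_le_mul_of_nonneg_right hexp dist_nonneg

lemma key_plus (hη : ContDiff ℝ 1 η)
    (hφ0 : ∀ x, φ 0 x = x)
    (hφ : ∀ t x, HasDerivAt (fun s => φ s x) (η (φ t x)) t)
    (hφx : ∀ t, ContDiff ℝ 1 (φ t)) (z : E) :
    HasDerivWithinAt (fun h => fderiv ℝ (φ h) z) (fderiv ℝ η z) (Ici (0:ℝ)) 0 := by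
  rw [hasDerivWithinAt_iff_isLittleO, Asymptotics.isLittleO_iff]
  intro c hc
  obtain ⟨L, hL⟩ := lip_on_ball hη z 2
  set eL : ℝ := exp (L:ℝ) with heLdef
  have heLpos : 0 < eL := exp_pos _
  have heL1 : 1 ≤ eL := Real.one_le_exp L.coe_nonneg
  set Cη : ℝ := ‖fderiv ℝ η z‖ with hCηdef
  have hCη0 : 0 ≤ Cη := norm_nonneg _
  set ε' : ℝ := c / (2 * (eL + 1)) with hε'def
  have hε'pos : 0 < ε' := by positivity
  set KK : ℝ := (L:ℝ) * eL * Cη with hKKdef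
  have hKK0 : 0 ≤ KK := by positivity
  set T₂ : ℝ := c / (2 * (KK + 1)) with hT₂def
  have hT₂pos : 0 < T₂ := by positivity
  -- choice of ρ from continuity of fderiv η at z
  have hfc : Filter.Tendsto (fderiv ℝ η) (nhds z) (nhds (fderiv ℝ η z)) :=
    ((hη.continuous_fderiv one_ne_zero).continuousAt)
  have hev : ∀ᶠ w in nhds z, dist (fderiv ℝ η w) (fderiv ℝ η z) < ε' :=
    Metric.tendsto_nhds.mp hfc ε' hε'pos
  obtain ⟨ρ₁, hρ₁pos, hρ₁⟩ := Metric.eventually_nhds_iff.mp hev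
  set ρ : ℝ := min (ρ₁/2) 1 with hρdef
  have hρ0 : 0 < ρ := lt_min (by positivity) one_pos
  have hρ1 : ρ ≤ 1 := min_le_right _ _
  have hρbound : ∀ w ∈ closedBall z ρ, ‖fderiv ℝ η w - fderiv ℝ η z‖ ≤ ε' := by
    intro w hw
    have : dist w z < ρ₁ := lt_of_le_of_lt (le_trans (mem_closedBall.mp hw)
      (min_le_left _ _)) (by linarith)
    simpa [dist_eq_norm] using le_of_lt (hρ₁ this)
  obtain ⟨r, hr0, T0, hT0pos, hT0le1, hcontain, hlipflow⟩ := flow_boot hφ0 hφ z hρ0 hρ1 hL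
  set δ : ℝ := min T0 T₂ with hδdef
  have hδpos : 0 < δ := lt_min hT0pos hT₂pos
  -- MVT estimate
  have hθ : ∀ w₁ ∈ closedBall z ρ, ∀ w₂ ∈ closedBall z ρ,
      ‖η w₁ - η w₂ - (fderiv ℝ η z) (w₁ - w₂)‖ ≤ ε' * ‖w₁ - w₂‖ := by
    intro w₁ h₁ w₂ h₂
    set θf : E → E := fun w => η w - fderiv ℝ η z w with hθdef
    have hdiff : ∀ w ∈ closedBall z ρ, DifferentiableAt ℝ θf w := fun w _ =>
      ((hη.differentiable one_ne_zero) w).sub ((fderiv ℝ η z).differentiableAt)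
    have hfd : ∀ w ∈ closedBall z ρ, ‖fderiv ℝ θf w‖ ≤ ε' := by
      intro w hw
      have h1 : HasFDerivAt θf (fderiv ℝ η w - fderiv ℝ η z) w :=
        ((hη.differentiable one_ne_zero w).hasFDerivAt).sub ((fderiv ℝ η z).hasFDerivAt)
      rw [h1.fderiv]
      exact hρbound w hw
    have hmvt := Convex.norm_image_sub_le_of_norm_fderiv_le hdiff hfd
      (convex_closedBall z ρ) h₂ h₁
    have heqv : η w₁ - η w₂ - (fderiv ℝ η z) (w₁ - w₂) = θf w₁ - θf w₂ := by
      simp only [hθdef, map_sub]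
      abel
    rw [heqv]
    exact hmvt
  have hcont_y : ∀ y : E, Continuous (fun u => η (φ u y)) := fun y =>
    hη.continuous.comp (traj_cont hφ y)
  have key1 : ∀ (h : ℝ) (y : E),
      φ h y - y - h • η y = ∫ u in (0:ℝ)..h, (η (φ u y) - η y) := by
    intro h y
    rw [intervalIntegral.integral_sub ((hcont_y y).intervalIntegrable 0 h)
      (continuous_const.intervalIntegrable 0 h), flow_integral hη hφ0 hφ y h,
      intervalIntegral.integral_const]
    simp
  -- eventual bound
  filter_upwards [self_mem_nhdsWithin, mem_nhdsWithin_of_mem_nhds (Iio_mem_nhds hδpos)]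
    with h hh0' hhδ'
  have hh0 : (0:ℝ) ≤ h := hh0'
  have hhδ : h < δ := hhδ'
  have hhT0 : h ≤ T0 := le_trans (le_of_lt hhδ) (min_le_left _ _)
  have hhT₂ : h ≤ T₂ := le_trans (le_of_lt hhδ) (min_le_right _ _)
  simp only [sub_zero]
  have hid : fderiv ℝ (φ 0) z = ContinuousLinearMap.id ℝ E := by
    have hφ0' : φ 0 = fun y => y := funext hφ0
    rw [hφ0', fderiv_id']
  set g : E → E := fun y => φ h y - y - h • η y with hgdef
  -- Lipschitz estimate for g on closedBall z r
  have hgl : ∀ y₁ ∈ closedBall z r, ∀ y₂ ∈ closedBall z r,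
      ‖g y₁ - g y₂‖ ≤ (c * h) * ‖y₁ - y₂‖ := by
    intro y₁ hy₁ y₂ hy₂
    have hkey : g y₁ - g y₂ =
        ∫ u in (0:ℝ)..h, ((η (φ u y₁) - η y₁) - (η (φ u y₂) - η y₂)) := by
      rw [hgdef]
      simp only []
      rw [key1 h y₁, key1 h y₂, ← intervalIntegral.integral_sub (f := fun u => η (φ u y₁) - η y₁)
        (g := fun u => η (φ u y₂) - η y₂)
        (((hcont_y y₁).sub continuous_const).intervalIntegrable 0 h)
        (((hcont_y y₂).sub continuous_const).intervalIntegrable 0 h)]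
    have hbound : ∀ u ∈ Set.uIoc (0:ℝ) h,
        ‖(η (φ u y₁) - η y₁) - (η (φ u y₂) - η y₂)‖ ≤ c * ‖y₁ - y₂‖ := by
      intro u hu
      have hu' : u ∈ Ioc (0:ℝ) h := by rwa [Set.uIoc_of_le hh0] at hu
      have huT0 : u ∈ Icc (0:ℝ) T0 := ⟨le_of_lt hu'.1, le_trans hu'.2 hhT0⟩
      have ha₁ : φ u y₁ ∈ closedBall z ρ := hcontain y₁ hy₁ u huT0
      have ha₂ : φ u y₂ ∈ closedBall z ρ := hcontain y₂ hy₂ u huT0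
      have h0T0 : (0:ℝ) ∈ Icc (0:ℝ) T0 := ⟨le_refl _, le_of_lt hT0pos⟩
      have hy₁ρ : y₁ ∈ closedBall z ρ := by
        have := hcontain y₁ hy₁ 0 h0T0
        rwa [hφ0 y₁] at this
      have hy₂ρ : y₂ ∈ closedBall z ρ := by
        have := hcontain y₂ hy₂ 0 h0T0
        rwa [hφ0 y₂] at this
      have hdec : (η (φ u y₁) - η y₁) - (η (φ u y₂) - η y₂)
          = (η (φ u y₁) - η (φ u y₂) - (fderiv ℝ η z) (φ u y₁ - φ u y₂))
            - (η y₁ - η y₂ - (fderiv ℝ η z) (y₁ - y₂))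
            + (fderiv ℝ η z) (φ u y₁ - φ u y₂ - (y₁ - y₂)) := by
        simp only [map_sub]
        abel
      have h1 := hθ _ ha₁ _ ha₂
      have h2 := hθ _ hy₁ρ _ hy₂ρ
      have hflip : ‖φ u y₁ - φ u y₂‖ ≤ eL * ‖y₁ - y₂‖ := by
        have := hlipflow y₁ hy₁ y₂ hy₂ u huT0
        rwa [dist_eq_norm, dist_eq_norm] at this
      have h3 : ‖(fderiv ℝ η z) (φ u y₁ - φ u y₂ - (y₁ - y₂))‖
          ≤ Cη * ‖φ u y₁ - φ u y₂ - (y₁ - y₂)‖ := (fderiv ℝ η z).le_opNorm _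
      have hdiffint : φ u y₁ - φ u y₂ - (y₁ - y₂)
          = ∫ v in (0:ℝ)..u, (η (φ v y₁) - η (φ v y₂)) := by
        rw [intervalIntegral.integral_sub ((hcont_y y₁).intervalIntegrable 0 u)
          ((hcont_y y₂).intervalIntegrable 0 u), flow_integral hη hφ0 hφ y₁ u,
          flow_integral hη hφ0 hφ y₂ u]
        abel
      have h4 : ‖φ u y₁ - φ u y₂ - (y₁ - y₂)‖ ≤ u * ((L:ℝ) * (eL * ‖y₁ - y₂‖)) := by
        rw [hdiffint]
        have hb : ∀ v ∈ Set.uIoc (0:ℝ) u,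
            ‖η (φ v y₁) - η (φ v y₂)‖ ≤ (L:ℝ) * (eL * ‖y₁ - y₂‖) := by
          intro v hv
          have hv' : v ∈ Ioc (0:ℝ) u := by rwa [Set.uIoc_of_le (le_of_lt hu'.1)] at hv
          have hvT0 : v ∈ Icc (0:ℝ) T0 := ⟨le_of_lt hv'.1, le_trans hv'.2 huT0.2⟩
          have hb1 : φ v y₁ ∈ closedBall z 2 :=
            closedBall_subset_closedBall (by linarith) (hcontain y₁ hy₁ v hvT0)
          have hb2 : φ v y₂ ∈ closedBall z 2 :=
            closedBall_subset_closedBall (by linarith) (hcontain y₂ hy₂ v hvT0)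
          calc ‖η (φ v y₁) - η (φ v y₂)‖ = dist (η (φ v y₁)) (η (φ v y₂)) :=
                (dist_eq_norm _ _).symm
            _ ≤ (L:ℝ) * dist (φ v y₁) (φ v y₂) := hL.dist_le_mul _ hb1 _ hb2
            _ ≤ (L:ℝ) * (eL * dist y₁ y₂) :=
                mul_le_mul_of_nonneg_left (hlipflow y₁ hy₁ y₂ hy₂ v hvT0) L.coe_nonneg
            _ = (L:ℝ) * (eL * ‖y₁ - y₂‖) := by rw [dist_eq_norm]
        have := intervalIntegral.norm_integral_le_of_norm_le_const hb
        rw [sub_zero, abs_of_nonneg (le_of_lt hu'.1)] at this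
        linarith [this]
      -- combine
      rw [hdec]
      have e1 : ε' * (eL + 1) = c/2 := by
        rw [hε'def]
        field_simp
      have hT₂eq : T₂ * (2 * (KK + 1)) = c := by
        rw [hT₂def]
        field_simp
      have e2 : T₂ * KK ≤ c/2 := by nlinarith [hT₂pos]
      have huT₂ : u ≤ T₂ := le_trans hu'.2 hhT₂
      set d : ℝ := ‖y₁ - y₂‖ with hddef
      have hd0 : 0 ≤ d := norm_nonneg _
      calc ‖(η (φ u y₁) - η (φ u y₂) - (fderiv ℝ η z) (φ u y₁ - φ u y₂))
            - (η y₁ - η y₂ - (fderiv ℝ η z) (y₁ - y₂))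
            + (fderiv ℝ η z) (φ u y₁ - φ u y₂ - (y₁ - y₂))‖
          ≤ ‖(η (φ u y₁) - η (φ u y₂) - (fderiv ℝ η z) (φ u y₁ - φ u y₂))
            - (η y₁ - η y₂ - (fderiv ℝ η z) (y₁ - y₂))‖
            + ‖(fderiv ℝ η z) (φ u y₁ - φ u y₂ - (y₁ - y₂))‖ := norm_add_le _ _
        _ ≤ (‖η (φ u y₁) - η (φ u y₂) - (fderiv ℝ η z) (φ u y₁ - φ u y₂)‖
            + ‖η y₁ - η y₂ - (fderiv ℝ η z) (y₁ - y₂)‖)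
            + ‖(fderiv ℝ η z) (φ u y₁ - φ u y₂ - (y₁ - y₂))‖ :=
            add_le_add_left (norm_sub_le _ _) _
        _ ≤ (ε' * ‖φ u y₁ - φ u y₂‖ + ε' * d) + Cη * ‖φ u y₁ - φ u y₂ - (y₁ - y₂)‖ :=
            add_le_add (add_le_add h1 h2) h3
        _ ≤ (ε' * (eL * d) + ε' * d) + Cη * (u * ((L:ℝ) * (eL * d))) := by
            refine add_le_add (add_le_add ?_ le_rfl) ?_
            · exact mul_le_mul_of_nonneg_left hflip (le_of_lt hε'pos)
            · exact mul_le_mul_of_nonneg_left h4 hCη0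
        _ = ε' * (eL + 1) * d + (u * KK) * d := by
            rw [hKKdef]
            ring
        _ ≤ (c/2) * d + (c/2) * d := by
            refine add_le_add (by rw [e1]) ?_
            refine mul_le_mul_of_nonneg_right ?_ hd0
            calc u * KK ≤ T₂ * KK := mul_le_mul_of_nonneg_right huT₂ hKK0
              _ ≤ c/2 := e2
        _ = c * d := by ring
    have hnint := intervalIntegral.norm_integral_le_of_norm_le_const hbound
    rw [hkey]
    calc ‖∫ u in (0:ℝ)..h, ((η (φ u y₁) - η y₁) - (η (φ u y₂) - η y₂))‖
        ≤ c * ‖y₁ - y₂‖ * |h - 0| := hnint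
      _ = (c * h) * ‖y₁ - y₂‖ := by
          rw [sub_zero, abs_of_nonneg hh0]
          ring
  have hgd : HasFDerivAt g (fderiv ℝ (φ h) z - ContinuousLinearMap.id ℝ E
      - h • fderiv ℝ η z) z := by
    have h1 : HasFDerivAt (fun y => φ h y) (fderiv ℝ (φ h) z) z :=
      ((hφx h).differentiable one_ne_zero z).hasFDerivAt
    have h2 : HasFDerivAt (fun y : E => y) (ContinuousLinearMap.id ℝ E) z := hasFDerivAt_id z
    have h3 : HasFDerivAt (fun y => h • η y) (h • fderiv ℝ η z) z :=
      ((hη.differentiable one_ne_zero z).hasFDerivAt).const_smul h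
    exact (h1.sub h2).sub h3
  have hnorm : ‖fderiv ℝ (φ h) z - ContinuousLinearMap.id ℝ E - h • fderiv ℝ η z‖ ≤ c * h := by
    refine hgd.le_of_lip' (by positivity) ?_
    filter_upwards [closedBall_mem_nhds z hr0] with y hy
    exact hgl y hy z (mem_closedBall_self (le_of_lt hr0))
  rw [hid]
  calc ‖fderiv ℝ (φ h) z - ContinuousLinearMap.id ℝ E - h • fderiv ℝ η z‖
      ≤ c * h := hnorm
    _ = c * ‖h‖ := by rw [Real.norm_eq_abs, abs_of_nonneg hh0]


lemma key_two (hη : ContDiff ℝ 1 η)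
    (hφ0 : ∀ x, φ 0 x = x)
    (hφ : ∀ t x, HasDerivAt (fun s => φ s x) (η (φ t x)) t)
    (hφx : ∀ t, ContDiff ℝ 1 (φ t)) (z : E) :
    HasDerivAt (fun h => fderiv ℝ (φ h) z) (fderiv ℝ η z) 0 := by
  have hright := key_plus hη hφ0 hφ hφx z
  set φ' : ℝ → E → E := fun s y => φ (-s) y with hφ'def
  have hη' : ContDiff ℝ 1 (fun y => -η y) := hη.neg
  have hφ0' : ∀ x, φ' 0 x = x := by intro x; simp [hφ'def, hφ0]
  have hφ'h : ∀ t x, HasDerivAt (fun s => φ' s x) ((fun y => -η y) (φ' t x)) t := by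
    intro t x
    have h1 : HasDerivAt (fun s : ℝ => -s) (-1) t := hasDerivAt_neg' t
    have h2 := (hφ (-t) x).scomp (h := fun s : ℝ => -s) (x := t) h1
    simpa [Function.comp_def, hφ'def] using h2
  have hφx' : ∀ t, ContDiff ℝ 1 (φ' t) := fun t => hφx (-t)
  have hleft0 := key_plus hη' hφ0' hφ'h hφx' z
  rw [fderiv_fun_neg] at hleft0
  have hmaps : Set.MapsTo (fun u : ℝ => -u) (Iic 0) (Ici 0) := by
    intro u hu
    simpa using hu
  have hneg : HasDerivWithinAt (fun u : ℝ => -u) (-1) (Iic (0:ℝ)) 0 :=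
    (hasDerivAt_neg' (0:ℝ)).hasDerivWithinAt
  have hleft1 := hleft0.scomp_of_eq (x := (0:ℝ)) hneg hmaps (by norm_num)
  have hcomp : ((fun h => fderiv ℝ (φ' h) z) ∘ (fun u : ℝ => -u))
      = fun u => fderiv ℝ (φ u) z := by
    funext u
    simp [hφ'def, Function.comp, neg_neg]
  rw [hcomp] at hleft1
  have hval : (-1 : ℝ) • -(fderiv ℝ η z) = fderiv ℝ η z := by simp
  rw [hval] at hleft1
  have hunion := hleft1.union hright
  rwa [Set.Iic_union_Ici, hasDerivWithinAt_univ] at hunion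

end auxLie


/-- for `C¹` vector fields `U = ξ·∇`, `V = η·∇` with flow `φ` of `V`
(`φ t x = e^{tV}x`) and `ψ ∈ C¹`, the function
`t ↦ U(ψ ∘ e^{-tV})(e^{tV}x)` is differentiable with derivative
`[V,U](ψ ∘ e^{-tV})(e^{tV}x)`, where `[V,U] = (Vξ − Uη)·∇`. -/
theorem lie_derivative_flow_conjugation {n : ℕ}
    (ξ η : (Fin n → ℝ) → (Fin n → ℝ))
    (hξ : ContDiff ℝ 1 ξ) (hη : ContDiff ℝ 1 η)
    (ψ : (Fin n → ℝ) → ℝ) (hψ : ContDiff ℝ 1 ψ)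
    (φ : ℝ → (Fin n → ℝ) → (Fin n → ℝ))
    (hφ0 : ∀ x, φ 0 x = x)
    (hφ : ∀ t x, HasDerivAt (fun s => φ s x) (η (φ t x)) t)
    (hφx : ∀ t, ContDiff ℝ 1 (φ t))
    (x : Fin n → ℝ) (t : ℝ) :
    HasDerivAt
      (fun s => fderiv ℝ (fun y => ψ (φ (-s) y)) (φ s x) (ξ (φ s x)))
      (fderiv ℝ (fun y => ψ (φ (-t) y)) (φ t x)
        (fderiv ℝ ξ (φ t x) (η (φ t x)) - fderiv ℝ η (φ t x) (ξ (φ t x)))) t := by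
  have hφdiff : ∀ s : ℝ, Differentiable ℝ (φ s) := fun s => (hφx s).differentiable one_ne_zero
  have hψdiff : Differentiable ℝ ψ := hψ.differentiable one_ne_zero
  have hgroup : ∀ a b : ℝ, ∀ y, φ a (φ b y) = φ (a + b) y := fun a b y =>
    flow_group hη hφ0 hφ a b y
  have hinv : ∀ s : ℝ, ∀ y, φ (-s) (φ s y) = y := by
    intro s y
    rw [hgroup (-s) s y, neg_add_cancel, hφ0]
  set J : ℝ → (Fin n → ℝ) →L[ℝ] (Fin n → ℝ) := fun s => fderiv ℝ (φ s) x with hJdef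
  set B : ℝ → (Fin n → ℝ) →L[ℝ] (Fin n → ℝ) := fun s => fderiv ℝ (φ (-s)) (φ s x) with hBdef
  have hBJ : ∀ s, (B s).comp (J s) = ContinuousLinearMap.id ℝ _ := by
    intro s
    have hcomp : (φ (-s)) ∘ (φ s) = fun y => y := funext fun y => hinv s y
    calc (B s).comp (J s) = fderiv ℝ ((φ (-s)) ∘ (φ s)) x :=
          (fderiv_comp x (hφdiff (-s) (φ s x)) (hφdiff s x)).symm
      _ = fderiv ℝ (fun y : Fin n → ℝ => y) x := by rw [hcomp]
      _ = ContinuousLinearMap.id ℝ _ := fderiv_id'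
  have hJB : ∀ s, (J s).comp (B s) = ContinuousLinearMap.id ℝ _ := by
    intro s
    have hcomp : (φ s) ∘ (φ (-s)) = fun y => y := funext fun y => by
      rw [Function.comp_apply, hgroup s (-s) y, add_neg_cancel, hφ0]
    have h1 : fderiv ℝ ((φ s) ∘ (φ (-s))) (φ s x)
        = (fderiv ℝ (φ s) (φ (-s) (φ s x))).comp (fderiv ℝ (φ (-s)) (φ s x)) :=
      fderiv_comp (φ s x) (hφdiff s (φ (-s) (φ s x))) (hφdiff (-s) (φ s x))
    rw [hinv s x] at h1
    rw [hcomp, fderiv_id'] at h1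
    exact h1.symm
  have hJunit : ∀ s, ∃ u : ((Fin n → ℝ) →L[ℝ] (Fin n → ℝ))ˣ,
      (u : (Fin n → ℝ) →L[ℝ] (Fin n → ℝ)) = J s
        ∧ ((u⁻¹ : _ˣ) : (Fin n → ℝ) →L[ℝ] (Fin n → ℝ)) = B s := by
    intro s
    refine ⟨⟨J s, B s, ?_, ?_⟩, rfl, rfl⟩
    · show (J s) * (B s) = 1
      rw [ContinuousLinearMap.mul_def, ContinuousLinearMap.one_def]
      exact hJB s
    · show (B s) * (J s) = 1
      rw [ContinuousLinearMap.mul_def, ContinuousLinearMap.one_def]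
      exact hBJ s
  -- variational equation
  have hvar : ∀ s : ℝ, HasDerivAt J ((fderiv ℝ η (φ s x)).comp (J s)) s := by
    intro s
    have hkey : HasDerivAt (fun h => fderiv ℝ (φ h) (φ s x)) (fderiv ℝ η (φ s x)) 0 :=
      key_two hη hφ0 hφ hφx (φ s x)
    have h1 : HasDerivAt (fun h => (fderiv ℝ (φ h) (φ s x)).comp (J s))
        ((fderiv ℝ η (φ s x)).comp (J s)) 0 := by
      have := hkey.clm_comp (hasDerivAt_const (0:ℝ) (J s))
      simpa using this
    have h1' : HasDerivAt (fun h => (fderiv ℝ (φ h) (φ s x)).comp (J s))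
        ((fderiv ℝ η (φ s x)).comp (J s)) (s - s) := by
      rwa [sub_self]
    have h2 := HasDerivAt.comp_sub_const s s h1'
    have hfun : (fun u : ℝ => (fderiv ℝ (φ (u - s)) (φ s x)).comp (J s)) = J := by
      funext u
      have hcomp : (φ (u - s)) ∘ (φ s) = φ u := funext fun y => by
        rw [Function.comp_apply, hgroup (u - s) s y, sub_add_cancel]
      calc (fderiv ℝ (φ (u - s)) (φ s x)).comp (fderiv ℝ (φ s) x)
          = fderiv ℝ ((φ (u - s)) ∘ (φ s)) x :=
            (fderiv_comp x (hφdiff (u - s) (φ s x)) (hφdiff s x)).symm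
        _ = fderiv ℝ (φ u) x := by rw [hcomp]
    rw [hfun] at h2
    exact h2
  -- derivative of B
  have hBder : HasDerivAt B (-((B t).comp (fderiv ℝ η (φ t x)))) t := by
    obtain ⟨u, huval, huinv⟩ := hJunit t
    have hinv_d : HasFDerivAt Ring.inverse
        (-ContinuousLinearMap.mulLeftRight ℝ _ ((u⁻¹ : _ˣ) : (Fin n → ℝ) →L[ℝ] (Fin n → ℝ))
          ((u⁻¹ : _ˣ) : (Fin n → ℝ) →L[ℝ] (Fin n → ℝ))) (J t) := by
      rw [← huval]
      exact hasFDerivAt_ringInverse u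
    have hcomp := hinv_d.comp_hasDerivAt t (hvar t)
    have hfun : (Ring.inverse ∘ J) = B := by
      funext s
      obtain ⟨u', hu'val, hu'inv⟩ := hJunit s
      rw [Function.comp_apply, ← hu'val, Ring.inverse_unit, hu'inv]
    rw [hfun] at hcomp
    refine hcomp.congr_deriv (Eq.symm ?_)
    rw [huinv]
    rw [ContinuousLinearMap.neg_apply, ContinuousLinearMap.mulLeftRight_apply]
    rw [ContinuousLinearMap.mul_def, ContinuousLinearMap.mul_def]
    rw [ContinuousLinearMap.comp_assoc, ContinuousLinearMap.comp_assoc, hJB t,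
      ContinuousLinearMap.comp_id]
  -- derivative of A
  have hξd : HasDerivAt (fun s => ξ (φ s x)) (fderiv ℝ ξ (φ t x) (η (φ t x))) t :=
    ((hξ.differentiable one_ne_zero (φ t x)).hasFDerivAt).comp_hasDerivAt t (hφ t x)
  have hA := hBder.clm_apply hξd
  have hAval : (-((B t).comp (fderiv ℝ η (φ t x)))) (ξ (φ t x))
        + (B t) (fderiv ℝ ξ (φ t x) (η (φ t x)))
      = (B t) (fderiv ℝ ξ (φ t x) (η (φ t x)) - fderiv ℝ η (φ t x) (ξ (φ t x))) := by
    rw [ContinuousLinearMap.neg_apply, ContinuousLinearMap.comp_apply, map_sub]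
    abel
  rw [hAval] at hA
  -- final rewriting
  have hGfun : ∀ s : ℝ, fderiv ℝ (fun y => ψ (φ (-s) y)) (φ s x)
      = (fderiv ℝ ψ x).comp (B s) := by
    intro s
    have h1 : fderiv ℝ (ψ ∘ (φ (-s))) (φ s x)
        = (fderiv ℝ ψ (φ (-s) (φ s x))).comp (fderiv ℝ (φ (-s)) (φ s x)) :=
      fderiv_comp (φ s x) (hψdiff (φ (-s) (φ s x))) (hφdiff (-s) (φ s x))
    rw [hinv s x] at h1
    exact h1
  have hgoalfun : (fun s => fderiv ℝ (fun y => ψ (φ (-s) y)) (φ s x) (ξ (φ s x)))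
      = fun s => (fderiv ℝ ψ x) (B s (ξ (φ s x))) := by
    funext s
    rw [hGfun s]
    rfl
  rw [hgoalfun, hGfun t]
  have hfinal := ((fderiv ℝ ψ x).hasFDerivAt).comp_hasDerivAt t hA
  exact hfinal
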